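/- arXiv:1704.00982 — 2 statements merged into one kernel-verified Lean document; each statement's English description precedes it below -/
import Mathlib

section
/- Let a : ℕ → ℂ be such that a(n) lies in a wedge W(θ₁,θ₂) with 0 ≤ θ₂ − θ₁ < π for all but finitely many n ≥ 1, and suppose the Dirichlet series L(s) = Σ_{n≥1} a(n)/n^s has finite abscissa of convergence σ_c. Then L(s) cannot be continued analytically to any open neighborhood of the real point s = σ_c; that is, σ_c is a singularity of L. -/
open Complex Real Filter Topology
open scoped Classical

/-- The wedge `W(θ₁,θ₂) = {r·e^{iθ} : r ≥ 0, θ ∈ [θ₁,θ₂]}`. -/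
def Wedge (θ₁ θ₂ : ℝ) : Set ℂ :=
  {z : ℂ | ∃ r θ : ℝ, 0 ≤ r ∧ θ₁ ≤ θ ∧ θ ≤ θ₂ ∧ z = r * Complex.exp (θ * Complex.I)}

/-- The Dirichlet series `Σ_{n≥1} a(n) n^{-s}` converges at `s` (in the sense of
convergence of partial sums). -/
def DirichletConvAt (a : ℕ → ℂ) (s : ℂ) : Prop :=
  ∃ l : ℂ, Tendsto (fun N => ∑ n ∈ Finset.Icc 1 N, a n / (n : ℂ) ^ s) atTop (𝓝 l)

/-- The sum of the Dirichlet series at a point of convergence. -/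
noncomputable def DirichletSum (a : ℕ → ℂ) (s : ℂ) : ℂ :=
  if h : DirichletConvAt a s then h.choose else 0

section aux

lemma wedge_re {θ₁ θ₂ : ℝ} (h₂ : θ₂ - θ₁ < Real.pi) {z : ℂ} (hz : z ∈ Wedge θ₁ θ₂) :
    Real.cos ((θ₂ - θ₁)/2) * ‖z‖ ≤
      (Complex.exp (-(((θ₁+θ₂)/2 : ℝ) : ℂ) * Complex.I) * z).re := by
  obtain ⟨r, θ, hr, hθ₁, hθ₂, rfl⟩ := hz
  have hnorm : ‖(r : ℂ) * Complex.exp ((θ:ℝ) * Complex.I)‖ = r := by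
    rw [norm_mul, Complex.norm_exp_ofReal_mul_I, Complex.norm_real, Real.norm_eq_abs,
      _root_.abs_of_nonneg hr, mul_one]
  have hre : (Complex.exp (-(((θ₁+θ₂)/2 : ℝ):ℂ) * Complex.I)
      * ((r:ℂ) * Complex.exp ((θ:ℝ) * Complex.I))).re
      = r * Real.cos (θ - (θ₁+θ₂)/2) := by
    rw [mul_left_comm, ← Complex.exp_add]
    have h : -(((θ₁+θ₂)/2 : ℝ):ℂ) * Complex.I + (θ:ℝ) * Complex.I
        = ((θ - (θ₁+θ₂)/2 : ℝ):ℂ) * Complex.I := by push_cast; ring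
    rw [h, Complex.re_ofReal_mul, Complex.exp_ofReal_mul_I_re]
  rw [hnorm, hre]
  have habs : |θ - (θ₁+θ₂)/2| ≤ (θ₂-θ₁)/2 := abs_le.mpr ⟨by linarith, by linarith⟩
  have hcos := Real.cos_le_cos_of_nonneg_of_le_pi (abs_nonneg _) (by linarith [Real.pi_pos]) habs
  rw [Real.cos_abs] at hcos
  nlinarith [hr, hcos]

lemma sum_Icc_eq_sum_range_term (a : ℕ → ℂ) (s : ℂ) (N : ℕ) :
    ∑ n ∈ Finset.Icc 1 N, a n / (n : ℂ) ^ s = ∑ n ∈ Finset.range (N+1), LSeries.term a s n := by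
  rw [show (∑ n ∈ Finset.Icc 1 N, a n / (n : ℂ) ^ s)
      = ∑ n ∈ Finset.Icc 1 N, LSeries.term a s n from
    Finset.sum_congr rfl fun n hn => by
      rw [LSeries.term_of_ne_zero (by simp [Finset.mem_Icc] at hn; omega)]]
  refine Finset.sum_subset (fun x hx => ?_) (fun x hx hx' => ?_)
  · simp only [Finset.mem_Icc] at hx; simp only [Finset.mem_range]; omega
  · simp only [Finset.mem_Icc, Finset.mem_range] at hx hx'
    have : x = 0 := by omega
    simp [this]

lemma dirichletConvAt_tendsto {a : ℕ → ℂ} {s : ℂ} (h : LSeriesSummable a s) :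
    Tendsto (fun N => ∑ n ∈ Finset.Icc 1 N, a n / (n : ℂ) ^ s) atTop (𝓝 (LSeries a s)) := by
  have h1 : Tendsto (fun N : ℕ => ∑ n ∈ Finset.range N, LSeries.term a s n) atTop
      (𝓝 (LSeries a s)) := h.hasSum.tendsto_sum_nat
  have h2 := h1.comp (tendsto_add_atTop_nat 1)
  exact h2.congr fun N => (sum_Icc_eq_sum_range_term a s N).symm

lemma dirichletConvAt_of_summable {a : ℕ → ℂ} {s : ℂ} (h : LSeriesSummable a s) :
    DirichletConvAt a s := ⟨_, dirichletConvAt_tendsto h⟩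

lemma dirichletSum_eq {a : ℕ → ℂ} {s : ℂ} (h : LSeriesSummable a s) :
    DirichletSum a s = LSeries a s := by
  have hc := dirichletConvAt_of_summable h
  rw [DirichletSum, dif_pos hc]
  exact tendsto_nhds_unique hc.choose_spec (dirichletConvAt_tendsto h)

lemma summable_of_tendsto_Icc {f : ℕ → ℝ} {N₁ : ℕ} (hf : ∀ n, N₁ ≤ n → 0 ≤ f n) {l : ℝ}
    (h : Tendsto (fun N => ∑ n ∈ Finset.Icc 1 N, f n) atTop (𝓝 l)) : Summable f := by
  obtain ⟨C, hC⟩ := h.bddAbove_range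
  have hC' : ∀ N, ∑ n ∈ Finset.Icc 1 N, f n ≤ C := fun N => hC (Set.mem_range_self N)
  set N₂ := max N₁ 1 with hN₂
  have hN₂1 : 1 ≤ N₂ := le_max_right _ _
  rw [← summable_nat_add_iff N₂]
  refine summable_of_sum_range_le (c := C - ∑ n ∈ Finset.Icc 1 (N₂ - 1), f n)
    (fun i => hf _ (le_trans (le_max_left _ _) (Nat.le_add_left _ _))) (fun m => ?_)
  have e1 : ∑ i ∈ Finset.range m, f (i + N₂) = ∑ n ∈ Finset.Ico N₂ (N₂ + m), f n := by
    rw [Finset.sum_Ico_eq_sum_range]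
    simp [add_comm]
  have e2 : ∑ n ∈ Finset.Ico 1 N₂, f n + ∑ n ∈ Finset.Ico N₂ (N₂ + m), f n
      = ∑ n ∈ Finset.Ico 1 (N₂ + m), f n :=
    Finset.sum_Ico_consecutive _ hN₂1 (Nat.le_add_right _ _)
  have e3 : Finset.Ico 1 N₂ = Finset.Icc 1 (N₂ - 1) := by
    rw [← Finset.Ico_add_one_right_eq_Icc]; congr 1; omega
  have e4 : Finset.Ico 1 (N₂ + m) = Finset.Icc 1 (N₂ + m - 1) := by
    rw [← Finset.Ico_add_one_right_eq_Icc]; congr 1; omega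
  rw [e1]
  have := hC' (N₂ + m - 1)
  rw [← e4, ← e2, e3] at this
  linarith

lemma tsum_pow_div_factorial (y : ℝ) : ∑' k : ℕ, y ^ k / (Nat.factorial k : ℝ) = Real.exp y := by
  rw [Real.exp_eq_exp_ℝ, NormedSpace.exp_eq_tsum_div]

lemma logMul_iterate (a : ℕ → ℂ) (k n : ℕ) :
    (LSeries.logMul)^[k] a n = (Complex.log n) ^ k * a n := by
  induction k generalizing a with
  | zero => simp
  | succ k ih =>
      rw [Function.iterate_succ_apply, ih (LSeries.logMul a)]
      rw [LSeries.logMul]; ring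

lemma term_logPow (a : ℕ → ℂ) (s : ℂ) (k n : ℕ) :
    LSeries.term ((LSeries.logMul)^[k] a) s n
      = ((Real.log n : ℝ) : ℂ) ^ k * LSeries.term a s n := by
  rcases eq_or_ne n 0 with rfl | hn
  · simp
  · rw [LSeries.term_of_ne_zero hn, LSeries.term_of_ne_zero hn, logMul_iterate,
      Complex.natCast_log, mul_div_assoc]

lemma norm_term_logPow (a : ℕ → ℂ) (s : ℂ) (k n : ℕ) :
    ‖LSeries.term ((LSeries.logMul)^[k] a) s n‖
      = (Real.log n) ^ k * ‖LSeries.term a s n‖ := by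
  rw [term_logPow, norm_mul, norm_pow, Complex.norm_real, Real.norm_eq_abs,
    _root_.abs_of_nonneg (Real.log_natCast_nonneg n)]

lemma re_mul_term (e : ℂ) (a : ℕ → ℂ) (x : ℝ) {n : ℕ} (hn : n ≠ 0) :
    (e * LSeries.term a x n).re = (e * a n).re / (n : ℝ) ^ x := by
  rw [LSeries.term_of_ne_zero hn]
  have hpos : (0:ℝ) < (n : ℝ) := by exact_mod_cast Nat.pos_of_ne_zero hn
  have hcast : ((n : ℂ)) ^ (x : ℂ) = (((n : ℝ) ^ x : ℝ) : ℂ) := by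
    rw [← Complex.ofReal_natCast, Complex.ofReal_cpow hpos.le]
  rw [hcast, mul_div_assoc', Complex.div_ofReal_re]

lemma norm_term_real (a : ℕ → ℂ) (x : ℝ) {n : ℕ} (hn : n ≠ 0) :
    ‖LSeries.term a x n‖ = ‖a n‖ / (n : ℝ) ^ x := by
  rw [LSeries.norm_term_eq, if_neg hn, Complex.ofReal_re]

lemma key_term {c : ℝ} {e : ℂ} {a : ℕ → ℂ} {n : ℕ} (hn : n ≠ 0)
    (h : c * ‖a n‖ ≤ (e * a n).re) (x : ℝ) :
    c * ‖LSeries.term a x n‖ ≤ (e * LSeries.term a x n).re := by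
  have hpos : (0:ℝ) < (n : ℝ) ^ x :=
    Real.rpow_pos_of_pos (by exact_mod_cast Nat.pos_of_ne_zero hn) x
  rw [re_mul_term e a x hn, norm_term_real a x hn, ← mul_div_assoc]
  gcongr

end aux

set_option maxHeartbeats 4000000 in
/-- Wedge version of the Landau–Fekete theorem: if the coefficients `a n` eventually lie in a
wedge of opening angle `< π` and the Dirichlet series `Σ a(n) n^{-s}` has finite abscissa of
convergence `σc`, then the series has a singularity at the real point `s = σc`: it cannot be
continued analytically to any open neighborhood of `σc`. -/
theorem landau_fekete_wedge (a : ℕ → ℂ) (θ₁ θ₂ : ℝ) (h₁ : 0 ≤ θ₂ - θ₁) (h₂ : θ₂ - θ₁ < Real.pi)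
    (hwedge : ∀ᶠ n in atTop, a n ∈ Wedge θ₁ θ₂)
    (σc : ℝ)
    (hconv : ∀ s : ℂ, σc < s.re → DirichletConvAt a s)
    (hdiv : ∀ s : ℂ, s.re < σc → ¬ DirichletConvAt a s) :
    ¬ ∃ (U : Set ℂ) (g : ℂ → ℂ), IsOpen U ∧ (σc : ℂ) ∈ U ∧ DifferentiableOn ℂ g U ∧
        ∀ s ∈ U, σc < s.re → g s = DirichletSum a s := by
  rintro ⟨U, g, hUopen, hU0, hg, hgL⟩
  obtain ⟨N₀', hN₀'⟩ := eventually_atTop.mp hwedge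
  set N₀ : ℕ := max N₀' 1 with hN₀def
  have hN₀1 : 1 ≤ N₀ := le_max_right _ _
  have hwedge' : ∀ n, N₀ ≤ n → a n ∈ Wedge θ₁ θ₂ :=
    fun n hn => hN₀' n (le_trans (le_max_left _ _) hn)
  clear_value N₀
  set φ : ℝ := (θ₁ + θ₂)/2 with hφdef
  set c : ℝ := Real.cos ((θ₂ - θ₁)/2) with hcdef
  set e : ℂ := Complex.exp (-(φ : ℂ) * Complex.I) with hedef
  have hc : 0 < c := by
    rw [hcdef]
    apply Real.cos_pos_of_mem_Ioo
    constructor <;> [linarith [Real.pi_pos]; linarith]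
  have hc1 : c ≤ 1 := by rw [hcdef]; exact Real.cos_le_one _
  have he : ‖e‖ = 1 := by
    rw [hedef, show -(φ:ℂ) * Complex.I = ((-φ : ℝ) : ℂ) * Complex.I by push_cast; ring,
      Complex.norm_exp_ofReal_mul_I]
  have hwb : ∀ n, N₀ ≤ n → c * ‖a n‖ ≤ (e * a n).re := by
    intro n hn
    have := wedge_re h₂ (hwedge' n hn)
    rw [show -(((θ₁+θ₂)/2 : ℝ) : ℂ) = -(φ : ℂ) by rw [hφdef]] at this
    exact this
  clear_value φ c e
  -- Step A : absolute convergence for re > σc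
  have habs : ∀ x : ℝ, σc < x → LSeriesSummable a x := by
    intro x hx
    obtain ⟨l, hl⟩ := hconv x (by simpa using hx)
    have hre : Tendsto (fun N => ∑ n ∈ Finset.Icc 1 N, (e * a n).re / (n:ℝ) ^ x)
        atTop (𝓝 ((e * l).re)) := by
      have h1 : Tendsto (fun N => e * ∑ n ∈ Finset.Icc 1 N, a n / (n:ℂ) ^ (x:ℂ))
          atTop (𝓝 (e * l)) := hl.const_mul e
      have h2 := (Complex.continuous_re.tendsto _).comp h1
      refine h2.congr fun N => ?_
      rw [Function.comp_apply, Finset.mul_sum, Complex.re_sum]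
      refine Finset.sum_congr rfl fun n hn => ?_
      have hn0 : n ≠ 0 := by simp only [Finset.mem_Icc] at hn; omega
      rw [show a n / (n:ℂ)^(x:ℂ) = LSeries.term a x n from
        (LSeries.term_of_ne_zero hn0 a x).symm, re_mul_term e a x hn0]
    have hsum : Summable (fun n => (e * a n).re / (n:ℝ) ^ x) := by
      refine summable_of_tendsto_Icc (N₁ := N₀) (fun n hn => ?_) hre
      have h3 := hwb n hn
      have hn0 : (0:ℝ) < (n:ℝ) := by
        have : 1 ≤ n := le_trans hN₀1 hn
        exact_mod_cast this
      have hp : (0:ℝ) < (n:ℝ)^x := Real.rpow_pos_of_pos hn0 x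
      exact div_nonneg (le_trans (by positivity) h3) hp.le
    have : Summable (LSeries.term a x) := by
      refine Summable.of_norm_bounded_eventually_nat
        (g := fun n => c⁻¹ * ((e * a n).re / (n:ℝ)^x)) (hsum.mul_left c⁻¹) ?_
      filter_upwards [eventually_ge_atTop N₀] with n hn
      have hn0 : n ≠ 0 := by omega
      have hn1 : (0:ℝ) < (n:ℝ) := by
        have : 1 ≤ n := le_trans hN₀1 hn
        exact_mod_cast this
      have hp : (0:ℝ) < (n:ℝ)^x := Real.rpow_pos_of_pos hn1 x
      rw [norm_term_real a x hn0, ← mul_div_assoc]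
      have h3 := hwb n hn
      have h4 : ‖a n‖ ≤ c⁻¹ * (e * a n).re := by
        have h5 := mul_le_mul_of_nonneg_left h3 (inv_nonneg.mpr hc.le)
        rw [← mul_assoc, inv_mul_cancel₀ hc.ne', one_mul] at h5
        exact h5
      gcongr
    exact this
  have habsc : LSeries.abscissaOfAbsConv a ≤ (σc : EReal) :=
    LSeries.abscissaOfAbsConv_le_of_forall_lt_LSeriesSummable fun y hy => habs y hy
  -- the open half-plane
  have hopenH : IsOpen {z : ℂ | σc < z.re} := isOpen_lt continuous_const Complex.continuous_re
  have hgeq : ∀ s ∈ U, σc < s.re → g s = LSeries a s := by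
    intro s hs hres
    rw [hgL s hs hres, dirichletSum_eq]
    exact LSeriesSummable_of_abscissaOfAbsConv_lt_re
      (lt_of_le_of_lt habsc (by exact_mod_cast hres))
  set F : ℂ → ℂ := fun z => if σc < z.re then LSeries a z else g z with hFdef
  clear_value F
  have hFhalf : Set.EqOn F (LSeries a) {z : ℂ | σc < z.re} := by
    intro z hz
    simp only [hFdef]
    exact if_pos hz
  have hFU : Set.EqOn F g U := by
    intro z hz
    by_cases h : σc < z.re
    · simp only [hFdef]
      rw [if_pos h]; exact (hgeq z hz h).symm
    · simp only [hFdef]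
      rw [if_neg h]
  have hFdiff : ∀ z : ℂ, z ∈ {z : ℂ | σc < z.re} ∪ U → DifferentiableAt ℂ F z := by
    rintro z (hz | hz)
    · have hd : DifferentiableAt ℂ (LSeries a) z :=
        (LSeries_hasDerivAt (lt_of_le_of_lt habsc (by exact_mod_cast hz))).differentiableAt
      exact (Filter.EventuallyEq.differentiableAt_iff
        (hFhalf.eventuallyEq_of_mem (hopenH.mem_nhds hz))).mpr hd
    · have hd : DifferentiableAt ℂ g z := hg.differentiableAt (hUopen.mem_nhds hz)
      exact (Filter.EventuallyEq.differentiableAt_iff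
        (hFU.eventuallyEq_of_mem (hUopen.mem_nhds hz))).mpr hd
  -- geometry of the ball
  obtain ⟨ε, hε, hball⟩ := Metric.isOpen_iff.mp hUopen _ hU0
  set δ : ℝ := min 1 (ε^2/4) with hδdef
  have hδ : 0 < δ := lt_min one_pos (by positivity)
  have hδ1 : δ ≤ 1 := min_le_left _ _
  have hδ2 : δ ≤ ε^2/4 := min_le_right _ _
  clear_value δ
  set x0 : ℂ := ((σc + 1 : ℝ) : ℂ) with hx0def
  clear_value x0
  have hx0re : x0.re = σc + 1 := by rw [hx0def, Complex.ofReal_re]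
  have hx0abs : LSeries.abscissaOfAbsConv a < (x0.re : EReal) := by
    rw [hx0re]
    refine lt_of_le_of_lt habsc ?_
    exact_mod_cast lt_add_one σc
  have hx0memH : x0 ∈ {z : ℂ | σc < z.re} := by
    simp only [Set.mem_setOf_eq, hx0re]; linarith
  have hgeom : Metric.ball x0 (1+δ) ⊆ {z : ℂ | σc < z.re} ∪ U := by
    intro z hz
    by_cases h : σc < z.re
    · exact Or.inl h
    · refine Or.inr (hball ?_)
      rw [Metric.mem_ball, Complex.dist_eq] at hz ⊢
      have h3a : Complex.normSq (z - x0) = (z.re - (σc+1))^2 + z.im^2 := by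
        rw [Complex.normSq_apply, hx0def]
        simp only [Complex.sub_re, Complex.sub_im, Complex.ofReal_re, Complex.ofReal_im,
          sub_zero]
        ring
      have h3b : Complex.normSq (z - (σc:ℂ)) = (z.re - σc)^2 + z.im^2 := by
        rw [Complex.normSq_apply]
        simp only [Complex.sub_re, Complex.sub_im, Complex.ofReal_re, Complex.ofReal_im,
          sub_zero]
        ring
      have h1 : Complex.normSq (z - x0) < (1+δ)^2 := by
        rw [← Complex.sq_norm]
        nlinarith [norm_nonneg (z - x0), hz]
      have h4 : z.re ≤ σc := not_lt.mp h
      have h5 : Complex.normSq (z - (σc:ℂ)) < ε^2 := by nlinarith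
      have h6 := Complex.sq_norm (z - (σc:ℂ))
      nlinarith [norm_nonneg (z - (σc:ℂ)), hε]
  have hFball : DifferentiableOn ℂ F (Metric.ball x0 (1+δ)) :=
    fun z hz => (hFdiff z (hgeom hz)).differentiableWithinAt
  -- Taylor series at x0, evaluated at σc - δ/2
  set z₁ : ℂ := ((σc - δ/2 : ℝ) : ℂ) with hz₁def
  clear_value z₁
  have hz₁diff : z₁ - x0 = ((-(1+δ/2) : ℝ) : ℂ) := by
    rw [hz₁def, hx0def]; push_cast; ring
  have hz₁mem : z₁ ∈ Metric.ball x0 (1+δ) := by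
    rw [Metric.mem_ball, Complex.dist_eq, hz₁diff, Complex.norm_real, Real.norm_eq_abs,
      _root_.abs_of_nonpos (by linarith)]
    linarith
  have hz₁norm : ‖z₁ - x0‖ = 1 + δ/2 := by
    rw [hz₁diff, Complex.norm_real, Real.norm_eq_abs, _root_.abs_of_nonpos (by linarith)]
    ring
  have hts := Complex.hasSum_taylorSeries_on_ball hFball hz₁mem
  obtain ⟨M, hM⟩ := ((hts.summable.tendsto_atTop_zero).norm).bddAbove_range
  have hMk : ∀ k : ℕ, ‖iteratedDeriv k F x0‖ ≤ M * (Nat.factorial k) / (1+δ/2)^k := by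
    intro k
    have h1 := hM (Set.mem_range_self k)
    simp only [norm_smul, norm_pow, norm_inv, Complex.norm_natCast, hz₁norm] at h1
    have hfac : (0:ℝ) < (Nat.factorial k : ℝ) := by
      exact_mod_cast Nat.factorial_pos k
    have hpow : (0:ℝ) < (1+δ/2)^k := by positivity
    rw [le_div_iff₀ hpow]
    have h2 := mul_le_mul_of_nonneg_left h1 hfac.le
    rw [← mul_assoc, mul_inv_cancel₀ hfac.ne', one_mul] at h2
    nlinarith [h2]
  have hDF : ∀ k : ℕ, iteratedDeriv k F x0
      = (-1)^k * LSeries ((LSeries.logMul)^[k] a) x0 := by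
    intro k
    have h1 := (hFhalf.iteratedDeriv_of_isOpen hopenH k) hx0memH
    rw [h1, LSeries_iteratedDeriv k hx0abs]
  -- coefficient bounds
  set A : ℝ := ∑ n ∈ Finset.range N₀, ‖LSeries.term a x0 n‖ with hAdef
  have hA : 0 ≤ A := Finset.sum_nonneg fun n _ => norm_nonneg _
  clear_value A
  set L : ℝ := Real.log N₀ with hLdef
  have hL : 0 ≤ L := by rw [hLdef]; exact Real.log_natCast_nonneg _
  clear_value L
  have htk : ∀ k : ℕ, LSeriesSummable ((LSeries.logMul)^[k] a) x0 := fun k =>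
    LSeriesSummable_of_abscissaOfAbsConv_lt_re
      (by rw [LSeries.absicssaOfAbsConv_logPowMul]; exact hx0abs)
  have hSk : ∀ k : ℕ, c * ∑' n, ‖LSeries.term ((LSeries.logMul)^[k] a) x0 n‖
      ≤ M * (Nat.factorial k) / (1+δ/2)^k + 2 * A * L^k := by
    intro k
    set t : ℕ → ℂ := LSeries.term ((LSeries.logMul)^[k] a) x0 with htdef
    have hts' : Summable t := htk k
    have hLt : LSeries ((LSeries.logMul)^[k] a) x0 = ∑' n, t n := rfl
    clear_value t
    have htn : Summable fun n => ‖t n‖ := summable_norm_iff.mpr hts'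
    have hre : HasSum (fun n => (e * t n).re)
        ((e * LSeries ((LSeries.logMul)^[k] a) x0).re) := by
      rw [hLt]
      exact Complex.hasSum_re ((hts'.hasSum).mul_left e)
    have hsub : Summable (fun n => c * ‖t n‖ - (e * t n).re) :=
      (htn.mul_left c).sub hre.summable
    have hmaj : ∀ n, c * ‖t n‖ - (e * t n).re ≤ (if n < N₀ then 2 * ‖t n‖ else 0) := by
      intro n
      by_cases hn : n < N₀
      · rw [if_pos hn]
        have h2 : ‖e * t n‖ = ‖t n‖ := by rw [norm_mul, he, one_mul]
        have h1 : |(e * t n).re| ≤ ‖t n‖ := by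
          calc |(e * t n).re| ≤ ‖e * t n‖ := Complex.abs_re_le_norm _
            _ = ‖e * t n‖ := rfl
            _ = ‖t n‖ := h2
        have h1' := abs_le.mp h1
        have h1'' : c * ‖t n‖ ≤ ‖t n‖ := mul_le_of_le_one_left (norm_nonneg _) hc1
        linarith [h1'.1, h1'.2]
      · rw [if_neg hn]
        have hn0 : n ≠ 0 := by omega
        have hN : N₀ ≤ n := le_of_not_gt hn
        have h3 : c * ‖a n‖ ≤ (e * a n).re := hwb n hN
        have hkey : c * ‖LSeries.term a x0 n‖ ≤ (e * LSeries.term a x0 n).re := by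
          rw [hx0def]
          exact key_term hn0 h3 (σc + 1)
        have h5 : e * t n
            = (((Real.log n)^k : ℝ) : ℂ) * (e * LSeries.term a x0 n) := by
          rw [htdef, term_logPow]; push_cast; ring
        have h6 : (e * t n).re = (Real.log n)^k * (e * LSeries.term a x0 n).re := by
          rw [h5, Complex.re_ofReal_mul]
        have h7 : ‖t n‖ = (Real.log n)^k * ‖LSeries.term a x0 n‖ := by
          rw [htdef, norm_term_logPow]
        have h8 : (0:ℝ) ≤ (Real.log n)^k :=
          pow_nonneg (Real.log_natCast_nonneg n) k
        rw [h6, h7]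
        have h9 := mul_le_mul_of_nonneg_left hkey h8
        linarith [h9]
    have hifsum : Summable (fun n => if n < N₀ then 2 * ‖t n‖ else 0) := by
      refine summable_of_ne_finset_zero (s := Finset.range N₀) (fun n hn => ?_)
      rw [Finset.mem_range] at hn
      rw [if_neg hn]
    have h6 := Summable.tsum_le_tsum hmaj hsub hifsum
    have h7 : ∑' n, (c * ‖t n‖ - (e * t n).re)
        = c * (∑' n, ‖t n‖) - (e * LSeries ((LSeries.logMul)^[k] a) x0).re := by
      rw [Summable.tsum_sub (htn.mul_left c) hre.summable, tsum_mul_left, hre.tsum_eq]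
    have h8 : ∑' n, (if n < N₀ then 2 * ‖t n‖ else 0)
        = ∑ n ∈ Finset.range N₀, (if n < N₀ then 2 * ‖t n‖ else 0) := by
      refine tsum_eq_sum (fun n hn => ?_)
      rw [Finset.mem_range] at hn
      rw [if_neg hn]
    have h9 : ∑ n ∈ Finset.range N₀, (if n < N₀ then 2 * ‖t n‖ else 0) ≤ 2 * A * L^k := by
      have hb : ∀ n ∈ Finset.range N₀, (if n < N₀ then 2 * ‖t n‖ else 0)
          ≤ 2 * L^k * ‖LSeries.term a x0 n‖ := by
        intro n hn
        rw [Finset.mem_range] at hn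
        rw [if_pos hn]
        have h7 : ‖t n‖ = (Real.log n)^k * ‖LSeries.term a x0 n‖ := by
          rw [htdef, norm_term_logPow]
        have hlog : Real.log n ≤ L := by
          rcases eq_or_ne n 0 with rfl | hn0
          · simpa using hL
          · rw [hLdef]
            refine Real.log_le_log (by exact_mod_cast Nat.pos_of_ne_zero hn0) ?_
            exact_mod_cast le_of_lt hn
        have hpk : (Real.log n)^k ≤ L^k :=
          pow_le_pow_left₀ (Real.log_natCast_nonneg n) hlog k
        rw [h7]
        have h10 := mul_le_mul_of_nonneg_right hpk (norm_nonneg (LSeries.term a x0 n))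
        linarith
      calc ∑ n ∈ Finset.range N₀, (if n < N₀ then 2 * ‖t n‖ else 0)
          ≤ ∑ n ∈ Finset.range N₀, 2 * L^k * ‖LSeries.term a x0 n‖ :=
            Finset.sum_le_sum hb
        _ = 2 * A * L^k := by rw [← Finset.mul_sum, hAdef]; ring
    have h10 : (e * LSeries ((LSeries.logMul)^[k] a) x0).re ≤ ‖iteratedDeriv k F x0‖ := by
      rw [hDF k, norm_mul, norm_pow, norm_neg, norm_one, one_pow, one_mul]
      calc (e * LSeries ((LSeries.logMul)^[k] a) x0).re
          ≤ ‖e * LSeries ((LSeries.logMul)^[k] a) x0‖ := Complex.re_le_norm _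
        _ = ‖LSeries ((LSeries.logMul)^[k] a) x0‖ := by
            rw [norm_mul, he, one_mul]
    have h11 := hMk k
    rw [h7, h8] at h6
    linarith
  -- final Fubini argument
  set ρ : ℝ := 1 + δ/4 with hρdef
  clear_value ρ
  have hρ : 0 < ρ := by rw [hρdef]; linarith
  set x : ℝ := σc - δ/4 with hxdef
  clear_value x
  have hq : ρ / (1+δ/2) < 1 := by
    rw [div_lt_one (by linarith)]
    rw [hρdef]; linarith
  have hq0 : 0 ≤ ρ / (1+δ/2) := by positivity
  set G : ℕ × ℕ → ℝ :=
    fun p => ‖LSeries.term a x0 p.2‖ * (ρ * Real.log p.2)^p.1 / (Nat.factorial p.1)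
    with hGdef
  clear_value G
  have hG0 : ∀ p, 0 ≤ G p := by
    intro p
    have h1 : 0 ≤ ρ * Real.log p.2 := mul_nonneg hρ.le (Real.log_natCast_nonneg _)
    have h2 : (0:ℝ) < (Nat.factorial p.1 : ℝ) := by exact_mod_cast Nat.factorial_pos p.1
    rw [hGdef]
    positivity
  have hGslice : ∀ k : ℕ, Summable (fun n => G (k, n)) := by
    intro k
    have h1 : (fun n => G (k,n)) = fun n =>
        (ρ^k / (Nat.factorial k : ℝ)) * ‖LSeries.term ((LSeries.logMul)^[k] a) x0 n‖ := by
      funext n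
      simp only [hGdef]
      rw [norm_term_logPow, mul_pow]
      ring
    rw [h1]
    exact (summable_norm_iff.mpr (htk k)).mul_left _
  have hWsum : Summable (fun k : ℕ =>
      c⁻¹ * (M * (ρ/(1+δ/2))^k + 2*A*((ρ*L)^k / (Nat.factorial k : ℝ)))) := by
    refine Summable.mul_left _ (Summable.add ?_ ?_)
    · exact (summable_geometric_of_lt_one hq0 hq).mul_left M
    · exact (Real.summable_pow_div_factorial (ρ*L)).mul_left (2*A)
  have hGtsum : ∀ k : ℕ, ∑' n, G (k, n)
      ≤ c⁻¹ * (M * (ρ/(1+δ/2))^k + 2*A*((ρ*L)^k / (Nat.factorial k : ℝ))) := by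
    intro k
    have h1 : (fun n => G (k,n)) = fun n =>
        (ρ^k / (Nat.factorial k : ℝ)) * ‖LSeries.term ((LSeries.logMul)^[k] a) x0 n‖ := by
      funext n
      simp only [hGdef]
      rw [norm_term_logPow, mul_pow]
      ring
    rw [h1, tsum_mul_left]
    have hS := hSk k
    have hfac : (0:ℝ) < (Nat.factorial k : ℝ) := by exact_mod_cast Nat.factorial_pos k
    have hSle : ∑' n, ‖LSeries.term ((LSeries.logMul)^[k] a) x0 n‖
        ≤ c⁻¹ * (M * (Nat.factorial k) / (1+δ/2)^k + 2 * A * L^k) := by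
      have h2 := mul_le_mul_of_nonneg_left hS (inv_nonneg.mpr hc.le)
      rw [← mul_assoc, inv_mul_cancel₀ hc.ne', one_mul] at h2
      exact h2
    have h3 := mul_le_mul_of_nonneg_left hSle (by positivity : (0:ℝ) ≤ ρ^k / (Nat.factorial k : ℝ))
    refine h3.trans_eq ?_
    have hpow : ((1:ℝ)+δ/2)^k ≠ 0 := by positivity
    rw [div_pow, mul_pow]
    field_simp
  have hGsum2 : Summable (fun k => ∑' n, G (k, n)) := by
    refine Summable.of_nonneg_of_le (fun k => tsum_nonneg (fun n => hG0 (k, n)))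
      (fun k => hGtsum k) hWsum
  have hGall : Summable G := by
    refine (summable_prod_of_nonneg (fun p => hG0 p)).mpr ⟨fun k => hGslice k, ?_⟩
    exact hGsum2
  have hGswap : Summable (fun p : ℕ × ℕ => G p.swap) := hGall.prod_symm
  have hGn : Summable (fun n => ∑' k, G (k, n)) := by
    have h2 := ((summable_prod_of_nonneg (fun p => hG0 p.swap)).mp hGswap).2
    exact h2
  have hinner : ∀ n : ℕ, ∑' k, G (k, n) = ‖LSeries.term a (x:ℂ) n‖ := by
    intro n
    have h1 : (fun k => G (k, n)) = fun k =>
        ‖LSeries.term a x0 n‖ * ((ρ * Real.log n)^k / (Nat.factorial k : ℝ)) := by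
      funext k
      simp only [hGdef]
      ring
    rw [h1, tsum_mul_left, tsum_pow_div_factorial]
    rcases eq_or_ne n 0 with rfl | hn
    · simp [LSeries.norm_term_eq]
    · have hn1 : (0:ℝ) < (n:ℝ) := by exact_mod_cast Nat.pos_of_ne_zero hn
      have hterm0 : ‖LSeries.term a x0 n‖ = ‖a n‖ / (n:ℝ)^(σc+1 : ℝ) := by
        rw [hx0def, norm_term_real a _ hn]
      have hterm1 : ‖LSeries.term a (x:ℂ) n‖ = ‖a n‖ / (n:ℝ)^(x : ℝ) := by
        rw [norm_term_real a _ hn]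
      have hexp : Real.exp (ρ * Real.log n) = (n:ℝ)^(ρ:ℝ) := by
        rw [Real.rpow_def_of_pos hn1, mul_comm]
      have hsplit : (n:ℝ)^(σc+1 : ℝ) = (n:ℝ)^(x:ℝ) * (n:ℝ)^(ρ:ℝ) := by
        rw [← Real.rpow_add hn1]
        congr 1
        rw [hxdef, hρdef]; ring
      rw [hterm0, hterm1, hexp, hsplit]
      have hx' : (n:ℝ)^(x:ℝ) ≠ 0 := (Real.rpow_pos_of_pos hn1 _).ne'
      have hρ' : (n:ℝ)^(ρ:ℝ) ≠ 0 := (Real.rpow_pos_of_pos hn1 _).ne'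
      field_simp
  have hGn' : Summable (fun n => ‖LSeries.term a (x:ℂ) n‖) := by
    refine hGn.congr (fun n => hinner n)
  have hfinal : LSeriesSummable a (x:ℂ) := summable_norm_iff.mp hGn'
  refine hdiv (x:ℂ) ?_ (dirichletConvAt_of_summable hfinal)
  rw [Complex.ofReal_re, hxdef]
  linarith
end

section
/- Let f(z) = Σ_{n≥1} a(n) e^{2πinz} be a nonzero function holomorphic on the upper half-plane whose Fourier coefficients satisfy: the Dirichlet series Σ a(n) n^{−s} converges for Re(s) > σ₀ and extends to an entire function, and suppose a(n) lies in a wedge W(θ₁,θ₂) (opening < π) for all but finitely many n. Then the Dirichlet series Σ a(n)n^{−s} converges for every s ∈ ℂ, and in particular Σ |a(n)| n^{−s} < ∞ for all real s. -/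
open Complex Real Filter Topology

lemma sum_Icc_one_eq {M : Type*} [AddCommMonoid M] (u : ℕ → M) (h0 : u 0 = 0) (K : ℕ) :
    ∑ n ∈ Finset.Icc 1 K, u n = ∑ n ∈ Finset.range (K + 1), u n := by
  induction K with
  | zero => simp [h0]
  | succ K ih =>
      rw [Finset.sum_range_succ, ← ih, Finset.sum_Icc_succ_top (Nat.le_add_left 1 K)]

lemma conj_comp_entire {g : ℂ → ℂ} (hg : Differentiable ℂ g) :
    Differentiable ℂ (fun s => (starRingEnd ℂ) (g ((starRingEnd ℂ) s))) := by
  intro x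
  have h := (hg ((starRingEnd ℂ) x)).hasDerivAt
  rw [hasDerivAt_iff_tendsto_slope] at h
  refine HasDerivAt.differentiableAt
    (f' := (starRingEnd ℂ) (deriv g ((starRingEnd ℂ) x))) ?_
  rw [hasDerivAt_iff_tendsto_slope]
  have hconj : Tendsto (starRingEnd ℂ) (𝓝[≠] x) (𝓝[≠] ((starRingEnd ℂ) x)) := by
    apply Filter.Tendsto.inf
    · exact (Complex.continuous_conj.tendsto x)
    · refine tendsto_principal_principal.mpr fun y hy => ?_
      simpa using fun h' => hy (by simpa using congrArg (starRingEnd ℂ) h')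
  have := (Complex.continuous_conj.tendsto _).comp (h.comp hconj)
  refine this.congr fun y => ?_
  simp only [Function.comp_apply, slope_def_field]
  rw [← map_sub, map_div₀, ← map_sub]
  simp

lemma wedge_re_bound {θ₁ θ₂ : ℝ} (h₁ : 0 ≤ θ₂ - θ₁) (h₂ : θ₂ - θ₁ < Real.pi)
    {z : ℂ} (hz : z ∈ Wedge θ₁ θ₂) :
    Real.cos ((θ₂ - θ₁) / 2) * ‖z‖ ≤
      (Complex.exp (-(((θ₁ + θ₂) / 2 : ℝ) : ℂ) * Complex.I) * z).re := by
  obtain ⟨r, θ, hr, hθ₁, hθ₂, rfl⟩ := hz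
  set φ := (θ₁ + θ₂) / 2
  have hnorm : ‖(r : ℂ) * Complex.exp (θ * Complex.I)‖ = r := by
    rw [norm_mul, Complex.norm_exp_ofReal_mul_I]
    simp [_root_.abs_of_nonneg hr, hr]
  rw [hnorm]
  have hmul : Complex.exp (-(φ : ℂ) * Complex.I) * ((r : ℂ) * Complex.exp (θ * Complex.I))
      = (r : ℂ) * Complex.exp (((θ - φ : ℝ) : ℂ) * Complex.I) := by
    rw [mul_left_comm, ← Complex.exp_add]
    push_cast
    ring_nf
  rw [hmul]
  have hre : ((r : ℂ) * Complex.exp (((θ - φ : ℝ) : ℂ) * Complex.I)).re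
      = r * Real.cos (θ - φ) := by
    rw [Complex.re_ofReal_mul, Complex.exp_ofReal_mul_I_re]
  rw [hre]
  have habs : |θ - φ| ≤ (θ₂ - θ₁) / 2 := by
    rw [abs_le]; constructor <;> [skip; skip] <;> simp only [φ] <;> linarith
  have hcos : Real.cos ((θ₂ - θ₁) / 2) ≤ Real.cos (θ - φ) := by
    rw [← Real.cos_abs (θ - φ)]
    apply Real.cos_le_cos_of_nonneg_of_le_pi (abs_nonneg _) (by linarith [Real.pi_pos]) habs
  calc Real.cos ((θ₂ - θ₁) / 2) * r ≤ Real.cos (θ - φ) * r :=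
        mul_le_mul_of_nonneg_right hcos hr
    _ = r * Real.cos (θ - φ) := mul_comm _ _

/-- If `f(z) = Σ_{n≥1} a(n) e^{2πinz}` is a nonzero holomorphic function on the upper half-plane
whose Dirichlet series `Σ a(n) n^{−s}` converges for `Re(s) > σ₀` and extends to an entire
function, and the coefficients `a n` eventually lie in a wedge of opening angle `< π`, then the
Dirichlet series converges at every `s ∈ ℂ`, and `Σ |a(n)| n^{−σ} < ∞` for every real `σ`. -/
theorem wedge_entire_dirichlet_converges_everywhere
    (a : ℕ → ℂ) (ha0 : a 0 = 0) (f : ℂ → ℂ)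
    (hf : DifferentiableOn ℂ f {z : ℂ | 0 < z.im})
    (hfa : ∀ z : ℂ, 0 < z.im → f z = ∑' n : ℕ, a n * Complex.exp (2 * Real.pi * Complex.I * n * z))
    (hfne : ∃ z : ℂ, 0 < z.im ∧ f z ≠ 0)
    (σ₀ : ℝ) (hconv : ∀ s : ℂ, σ₀ < s.re → DirichletConvAt a s)
    (g : ℂ → ℂ) (hg : Differentiable ℂ g)
    (hgagree : ∀ s : ℂ, σ₀ < s.re →
      Tendsto (fun N => ∑ n ∈ Finset.Icc 1 N, a n / (n : ℂ) ^ s) atTop (𝓝 (g s)))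
    (θ₁ θ₂ : ℝ) (h₁ : 0 ≤ θ₂ - θ₁) (h₂ : θ₂ - θ₁ < Real.pi)
    (hwedge : ∀ᶠ n in atTop, a n ∈ Wedge θ₁ θ₂) :
    (∀ s : ℂ, DirichletConvAt a s) ∧
      ∀ σ : ℝ, Summable (fun n : ℕ => ‖a n‖ * (n : ℝ) ^ (-σ)) := by
  clear hf hfa hfne hconv
  obtain ⟨N₀, hN₀⟩ := eventually_atTop.mp hwedge
  set M : ℕ := max N₀ 1 with hMdef
  have hM1 : 1 ≤ M := le_max_right _ _
  have hM0 : 0 < M := hM1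
  set c : ℝ := Real.cos ((θ₂ - θ₁) / 2) with hcdef
  have hc : 0 < c := by
    apply Real.cos_pos_of_mem_Ioo
    constructor
    · linarith [Real.pi_pos]
    · linarith
  set e : ℂ := Complex.exp (-(((θ₁ + θ₂) / 2 : ℝ) : ℂ) * Complex.I) with hedef
  have key : ∀ n, M ≤ n → c * ‖a n‖ ≤ (e * a n).re := fun n hn =>
    wedge_re_bound h₁ h₂ (hN₀ n (le_trans (le_max_left _ _) hn))
  set d : ℕ → ℝ := fun n => if n < M then 0 else (e * a n).re with hddef
  have hd0 : ∀ n, 0 ≤ d n := by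
    intro n
    simp only [hddef]
    split
    · exact le_rfl
    · exact le_trans (mul_nonneg hc.le (norm_nonneg _)) (key n (not_lt.mp (by assumption)))
  have hdge : ∀ n, M ≤ n → c * ‖a n‖ ≤ d n := by
    intro n hn
    simp only [hddef, if_neg (not_lt.mpr hn)]
    exact key n hn
  have hdM : ∀ n, n < M → d n = 0 := fun n hn => by simp only [hddef, if_pos hn]
  set b : ℕ → ℂ := fun n => (e * a n + (starRingEnd ℂ) (e * a n)) / 2 with hbdef
  have hdb : ∀ n, M ≤ n → (d n : ℂ) = b n := by
    intro n hn
    simp only [hddef, hbdef, if_neg (not_lt.mpr hn)]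
    rw [Complex.add_conj]
    push_cast
    ring
  set dc : ℕ → ℂ := fun n => (d n : ℂ) with hdcdef
  have hdc0 : dc 0 = 0 := by simp [hdcdef, hdM 0 hM0]
  -- the entire function F
  set F : ℂ → ℂ := fun s => (e * g s + (starRingEnd ℂ) (e * g ((starRingEnd ℂ) s))) / 2
      - ∑ n ∈ Finset.Ico 1 M, b n / (n : ℂ) ^ s with hFdef
  have hFdiff : Differentiable ℂ F := by
    apply Differentiable.sub
    · apply Differentiable.div_const
      apply Differentiable.add
      · exact hg.const_mul e
      · exact conj_comp_entire (hg.const_mul e)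
    · apply Differentiable.fun_sum
      intro n hn
      have hn1 : 1 ≤ n := (Finset.mem_Ico.mp hn).1
      have hne : (n : ℂ) ≠ 0 := Nat.cast_ne_zero.mpr (by omega)
      have heq : (fun s : ℂ => b n / (n : ℂ) ^ s) = fun s => b n * (n : ℂ) ^ (-s) := by
        funext s
        rw [Complex.cpow_neg, div_eq_mul_inv]
      rw [heq]
      exact (differentiable_neg.const_cpow (Or.inl hne)).const_mul (b n)
  -- conjugate power identity
  have hcpconj : ∀ (n : ℕ) (w : ℂ), (starRingEnd ℂ) ((n : ℂ) ^ ((starRingEnd ℂ) w)) = (n : ℂ) ^ w := by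
    intro n w
    have harg : (n : ℂ).arg ≠ Real.pi := by
      rw [Complex.natCast_arg]
      exact Real.pi_ne_zero.symm
    rw [Complex.cpow_conj _ _ harg, Complex.conj_conj, Complex.conj_natCast]
  -- convergence of the b-series
  have hconvb : ∀ s : ℂ, σ₀ < s.re →
      Tendsto (fun K => ∑ n ∈ Finset.Icc 1 K, b n / (n : ℂ) ^ s) atTop
        (𝓝 ((e * g s + (starRingEnd ℂ) (e * g ((starRingEnd ℂ) s))) / 2)) := by
    intro s hs
    have hs' : σ₀ < ((starRingEnd ℂ) s).re := by simpa using hs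
    have h1 := hgagree s hs
    have h2 := hgagree _ hs'
    have h1' := h1.const_mul e
    have h2' := (Complex.continuous_conj.tendsto _).comp (h2.const_mul e)
    have hsum := (h1'.add h2').div_const 2
    refine hsum.congr fun K => ?_
    rw [Function.comp_apply, map_mul, map_sum, Finset.mul_sum, Finset.mul_sum,
      ← Finset.sum_add_distrib, Finset.sum_div]
    refine Finset.sum_congr rfl fun n hn => ?_
    rw [map_div₀, hcpconj]
    simp only [hbdef]
    rw [map_mul]
    ring
  -- convergence of the dc-series to F
  have hdconv : ∀ s : ℂ, σ₀ < s.re →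
      Tendsto (fun K => ∑ n ∈ Finset.Icc 1 K, dc n / (n : ℂ) ^ s) atTop (𝓝 (F s)) := by
    intro s hs
    have hb := (hconvb s hs).sub_const (∑ n ∈ Finset.Ico 1 M, b n / (n : ℂ) ^ s)
    refine Tendsto.congr' ?_ hb
    filter_upwards [eventually_ge_atTop M] with K hK
    have hsplit : Finset.Ico 1 M ∪ Finset.Icc M K = Finset.Icc 1 K := by
      ext x
      simp only [Finset.mem_union, Finset.mem_Ico, Finset.mem_Icc]
      omega
    have hdisj : Disjoint (Finset.Ico 1 M) (Finset.Icc M K) := by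
      rw [Finset.disjoint_left]
      intro x hx hx'
      simp only [Finset.mem_Ico] at hx
      simp only [Finset.mem_Icc] at hx'
      omega
    rw [← hsplit, Finset.sum_union hdisj, Finset.sum_union hdisj]
    have hz : ∑ n ∈ Finset.Ico 1 M, dc n / (n : ℂ) ^ s = 0 := by
      apply Finset.sum_eq_zero
      intro n hn
      have h0 : d n = 0 := hdM n (Finset.mem_Ico.mp hn).2
      simp [hdcdef, h0]
    have hb2 : ∑ n ∈ Finset.Icc M K, dc n / (n : ℂ) ^ s
        = ∑ n ∈ Finset.Icc M K, b n / (n : ℂ) ^ s := by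
      refine Finset.sum_congr rfl fun n hn => ?_
      simp only [hdcdef]
      rw [hdb n (Finset.mem_Icc.mp hn).1]
    rw [hz, hb2]
    ring
  -- summability of d at real points > σ₀
  have hsummx : ∀ x : ℝ, σ₀ < x → Summable (fun n => d n * (n : ℝ) ^ (-x)) := by
    intro x hx
    set u : ℕ → ℝ := fun n => d n * (n : ℝ) ^ (-x) with hudef
    have hun : ∀ n, 0 ≤ u n := fun n =>
      mul_nonneg (hd0 n) (Real.rpow_nonneg (Nat.cast_nonneg n) _)
    have hu0 : u 0 = 0 := by simp [hudef, hdM 0 hM0]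
    have hcoe : ∀ K, ((∑ n ∈ Finset.Icc 1 K, u n : ℝ) : ℂ)
        = ∑ n ∈ Finset.Icc 1 K, dc n / (n : ℂ) ^ (x : ℂ) := by
      intro K
      push_cast
      refine Finset.sum_congr rfl fun n hn => ?_
      have hn1 : 1 ≤ n := (Finset.mem_Icc.mp hn).1
      have hpow : (n : ℂ) ^ (x : ℂ) = (((n : ℝ) ^ x : ℝ) : ℂ) := by
        rw [Complex.ofReal_cpow (Nat.cast_nonneg n)]
        norm_num
      rw [hpow]
      simp only [hudef, hdcdef]
      rw [Real.rpow_neg (Nat.cast_nonneg n)]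
      push_cast
      rw [div_eq_mul_inv]
    have hx' : σ₀ < ((x : ℂ)).re := by simpa using hx
    have htends := hdconv (x : ℂ) hx'
    have hre : Tendsto (fun K => ∑ n ∈ Finset.Icc 1 K, u n) atTop (𝓝 (F (x : ℂ)).re) := by
      have h := (Complex.continuous_re.tendsto _).comp htends
      refine h.congr fun K => ?_
      rw [Function.comp_apply, ← hcoe, Complex.ofReal_re]
    have hmono : Monotone (fun K => ∑ n ∈ Finset.Icc 1 K, u n) := fun i j hij =>
      Finset.sum_le_sum_of_subset_of_nonneg (Finset.Icc_subset_Icc_right hij)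
        (fun n _ _ => hun n)
    have hbound : ∀ K, ∑ n ∈ Finset.Icc 1 K, u n ≤ (F (x : ℂ)).re := fun K =>
      hmono.ge_of_tendsto hre K
    apply summable_of_sum_range_le hun
    intro K
    calc ∑ n ∈ Finset.range K, u n ≤ ∑ n ∈ Finset.range (K + 1), u n := by
          apply Finset.sum_le_sum_of_subset_of_nonneg
            (Finset.range_subset_range.mpr (Nat.le_succ K)) (fun n _ _ => hun n)
      _ = ∑ n ∈ Finset.Icc 1 K, u n := (sum_Icc_one_eq u hu0 K).symm
      _ ≤ (F (x : ℂ)).re := hbound K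
  -- L-series summability and abscissa
  have hLS : ∀ x : ℝ, σ₀ < x → LSeriesSummable dc x := by
    intro x hx
    have hsx := hsummx x hx
    apply Summable.of_norm
    refine hsx.of_nonneg_of_le (fun n => norm_nonneg _) fun n => ?_
    rw [LSeries.norm_term_eq]
    rcases eq_or_ne n 0 with rfl | hn
    · simp [hdM 0 hM0]
    · simp only [if_neg hn]
      rw [Complex.ofReal_re]
      have : ‖dc n‖ = d n := by
        simp only [hdcdef, Complex.norm_real]
        exact _root_.abs_of_nonneg (hd0 n)
      rw [this, Real.rpow_neg (Nat.cast_nonneg n), div_eq_mul_inv]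
  have habs : LSeries.abscissaOfAbsConv dc ≤ (σ₀ : EReal) :=
    LSeries.abscissaOfAbsConv_le_of_forall_lt_LSeriesSummable hLS
  -- F agrees with the L-series of dc on the half-plane
  have hU : IsOpen {s : ℂ | σ₀ < s.re} := isOpen_lt continuous_const Complex.continuous_re
  have hEq : Set.EqOn F (LSeries dc) {s : ℂ | σ₀ < s.re} := by
    intro s hs
    simp only [Set.mem_setOf_eq] at hs
    have h1 := hdconv s hs
    have hsum : LSeriesSummable dc s :=
      LSeriesSummable_of_abscissaOfAbsConv_lt_re
        (lt_of_le_of_lt habs (by exact_mod_cast hs))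
    have h2 := hsum.hasSum.tendsto_sum_nat
    have h3 : Tendsto (fun K => ∑ n ∈ Finset.Icc 1 K, dc n / (n : ℂ) ^ s) atTop
        (𝓝 (LSeries dc s)) := by
      have h4 := h2.comp (tendsto_add_atTop_nat 1)
      refine h4.congr fun K => ?_
      rw [Function.comp_apply, sum_Icc_one_eq _ (by rw [hdc0, zero_div]) K]
      refine Finset.sum_congr rfl fun n _ => ?_
      rcases eq_or_ne n 0 with rfl | hn
      · rw [hdc0, zero_div, LSeries.term_zero]
      · rw [LSeries.term_of_ne_zero hn]
    exact tendsto_nhds_unique h1 h3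
  set x₀ : ℝ := σ₀ + 1 with hx₀def
  have hx₀mem : (x₀ : ℂ) ∈ {s : ℂ | σ₀ < s.re} := by simp [hx₀def]
  have habs₀ : LSeries.abscissaOfAbsConv dc < ((x₀ : ℂ)).re :=
    lt_of_le_of_lt habs (by rw [Complex.ofReal_re]; exact_mod_cast (by simp [hx₀def] : σ₀ < x₀))
  -- iterated derivatives of F at x₀
  have hlogpow : ∀ (k : ℕ) (n : ℕ), (LSeries.logMul^[k] dc) n = (Complex.log n) ^ k * dc n := by
    intro k
    induction k with
    | zero => intro n; simp
    | succ k ih =>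
        intro n
        rw [Function.iterate_succ_apply', LSeries.logMul, ih, pow_succ]
        ring
  have hderiv : ∀ k : ℕ, iteratedDeriv k F (x₀ : ℂ)
      = (-1) ^ k * LSeries (LSeries.logMul^[k] dc) (x₀ : ℂ) := by
    intro k
    rw [hEq.iteratedDeriv_of_isOpen hU k hx₀mem]
    exact LSeries_iteratedDeriv k habs₀
  -- the real coefficients of the log-power series
  set wk : ℕ → ℕ → ℝ := fun k n => (Real.log n) ^ k * (d n * (n : ℝ) ^ (-x₀)) with hwkdef
  have hterm : ∀ (k n : ℕ), LSeries.term (LSeries.logMul^[k] dc) (x₀ : ℂ) n = ((wk k n : ℝ) : ℂ) := by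
    intro k n
    rcases eq_or_ne n 0 with rfl | hn
    · simp [hwkdef, LSeries.term_zero, hdM 0 hM0]
    · rw [LSeries.term_of_ne_zero hn, hlogpow]
      have hpow : (n : ℂ) ^ ((x₀ : ℝ) : ℂ) = (((n : ℝ) ^ x₀ : ℝ) : ℂ) := by
        rw [Complex.ofReal_cpow (Nat.cast_nonneg n)]
        norm_num
      rw [hpow, ← Complex.natCast_log]
      simp only [hwkdef, hdcdef]
      push_cast
      rw [Real.rpow_neg (Nat.cast_nonneg n)]
      push_cast
      ring
  have hLSk : ∀ k : ℕ, LSeriesSummable (LSeries.logMul^[k] dc) (x₀ : ℂ) := fun k =>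
    LSeriesSummable_of_abscissaOfAbsConv_lt_re
      (by rw [LSeries.absicssaOfAbsConv_logPowMul]; exact habs₀)
  have hwksum : ∀ k : ℕ, Summable (wk k) := by
    intro k
    have h := hLSk k
    rw [LSeriesSummable] at h
    rw [funext (hterm k)] at h
    exact Complex.summable_ofReal.mp h
  have hwt : ∀ k : ℕ, LSeries (LSeries.logMul^[k] dc) (x₀ : ℂ) = ((∑' n, wk k n : ℝ) : ℂ) := by
    intro k
    rw [LSeries, tsum_congr (hterm k), Complex.ofReal_tsum]
  -- the key step: summability of d at every x ≤ x₀
  have hdsum : ∀ x : ℝ, x ≤ x₀ → Summable (fun n => d n * (n : ℝ) ^ (-x)) := by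
    intro x hxle
    set w : ℕ → ℕ → ℝ := fun k n =>
      ((x₀ - x) * Real.log n) ^ k / (Nat.factorial k) * (d n * (n : ℝ) ^ (-x₀)) with hwdef
    have hw0 : ∀ k n, 0 ≤ w k n := by
      intro k n
      apply mul_nonneg
      · apply div_nonneg _ (by positivity)
        apply pow_nonneg
        exact mul_nonneg (by linarith) (Real.log_natCast_nonneg n)
      · exact mul_nonneg (hd0 n) (Real.rpow_nonneg (Nat.cast_nonneg n) _)
    have hwwk : ∀ k n, w k n = (x₀ - x) ^ k / (Nat.factorial k) * wk k n := by
      intro k n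
      simp only [hwdef, hwkdef, mul_pow]
      ring
    have hwks : ∀ k, Summable (w k) := fun k =>
      (((hwksum k).mul_left ((x₀ - x) ^ k / (Nat.factorial k))).congr
        fun n => (hwwk k n).symm)
    have hTay := hasSum_taylorSeries_of_entire hFdiff (x₀ : ℂ) (x : ℂ)
    have hterm2 : ∀ k : ℕ, (k.factorial : ℂ)⁻¹ • ((x : ℂ) - (x₀ : ℂ)) ^ k • iteratedDeriv k F (x₀ : ℂ)
        = ((∑' n, w k n : ℝ) : ℂ) := by
      intro k
      rw [hderiv k, hwt k]
      have htw : ∑' n, w k n = (x₀ - x) ^ k / (Nat.factorial k) * ∑' n, wk k n := by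
        rw [tsum_congr (hwwk k), tsum_mul_left]
      rw [htw]
      have hsign : ((x : ℂ) - (x₀ : ℂ)) ^ k * (-1 : ℂ) ^ k = ((x₀ : ℂ) - (x : ℂ)) ^ k := by
        rw [← mul_pow]
        congr 1
        ring
      rw [smul_eq_mul, smul_eq_mul]
      push_cast
      rw [← hsign]
      ring
    rw [funext hterm2] at hTay
    have hTre : HasSum (fun k => ∑' n, w k n) ((F (x : ℂ)).re) := by
      simpa using Complex.reCLM.hasSum hTay
    have hprod : Summable (fun p : ℕ × ℕ => w p.1 p.2) := by
      refine (summable_prod_of_nonneg fun p => hw0 p.1 p.2).mpr ⟨fun k => hwks k, ?_⟩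
      exact hTre.summable
    have hswap : Summable (fun p : ℕ × ℕ => w p.2 p.1) :=
      ((Equiv.prodComm ℕ ℕ).summable_iff).mpr hprod
    have hfac : Summable (fun n => ∑' k, w k n) :=
      ((summable_prod_of_nonneg fun p => hw0 p.2 p.1).mp hswap).2
    refine hfac.congr fun n => ?_
    rcases eq_or_ne n 0 with rfl | hn
    · simp [hwdef, hdM 0 hM0]
    · have hn' : (0 : ℝ) < n := Nat.cast_pos.mpr (Nat.pos_of_ne_zero hn)
      have : ∑' k, w k n = (∑' k, ((x₀ - x) * Real.log n) ^ k / (Nat.factorial k))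
          * (d n * (n : ℝ) ^ (-x₀)) := tsum_mul_right
      rw [this]
      have hexp : ∑' k, ((x₀ - x) * Real.log n) ^ k / (Nat.factorial k)
          = Real.exp ((x₀ - x) * Real.log n) := by
        rw [Real.exp_eq_exp_ℝ, NormedSpace.exp_eq_tsum_div]
      rw [hexp]
      have hrpow : Real.exp ((x₀ - x) * Real.log n) = (n : ℝ) ^ (x₀ - x) := by
        rw [Real.rpow_def_of_pos hn', mul_comm]
      rw [hrpow, mul_comm ((n:ℝ) ^ (x₀ - x)), mul_assoc, ← Real.rpow_add hn']
      ring_nf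
  -- final summability statement
  have hfinal : ∀ σ : ℝ, Summable (fun n : ℕ => ‖a n‖ * (n : ℝ) ^ (-σ)) := by
    intro σ
    set x : ℝ := min σ x₀ with hxdef
    have hxle : x ≤ x₀ := min_le_right _ _
    have hd := hdsum x hxle
    rw [← summable_nat_add_iff M]
    have hmaj : Summable (fun n => c⁻¹ * (d (n + M) * ((n + M : ℕ) : ℝ) ^ (-x))) :=
      ((summable_nat_add_iff M).mpr hd).mul_left c⁻¹
    refine hmaj.of_nonneg_of_le
      (fun n => mul_nonneg (norm_nonneg _) (Real.rpow_nonneg (Nat.cast_nonneg _) _)) fun n => ?_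
    set m : ℕ := n + M with hmdef
    have hm : M ≤ m := Nat.le_add_left M n
    have h1m : (1 : ℝ) ≤ m := by exact_mod_cast le_trans hM1 hm
    have hnn : (0 : ℝ) ≤ (m : ℝ) ^ (-x) := Real.rpow_nonneg (by positivity) _
    calc ‖a m‖ * (m : ℝ) ^ (-σ) ≤ ‖a m‖ * (m : ℝ) ^ (-x) := by
          apply mul_le_mul_of_nonneg_left _ (norm_nonneg _)
          exact Real.rpow_le_rpow_of_exponent_le h1m (neg_le_neg (min_le_left σ x₀))
      _ ≤ (c⁻¹ * d m) * (m : ℝ) ^ (-x) := by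
          apply mul_le_mul_of_nonneg_right _ hnn
          rw [inv_mul_eq_div, le_div_iff₀' hc]
          exact hdge m hm
      _ = c⁻¹ * (d m * (m : ℝ) ^ (-x)) := by ring
  refine ⟨fun s => ?_, hfinal⟩
  have hs := hfinal s.re
  have hsum : Summable (fun n => a n / (n : ℂ) ^ s) := by
    apply Summable.of_norm
    refine hs.of_nonneg_of_le (fun n => norm_nonneg _) fun n => ?_
    rcases eq_or_ne n 0 with rfl | hn
    · simp [ha0]
    · have hn' : (0 : ℝ) < n := Nat.cast_pos.mpr (Nat.pos_of_ne_zero hn)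
      rw [norm_div]
      have : ‖(n : ℂ) ^ s‖ = (n : ℝ) ^ s.re := by
        rw [show ((n : ℂ)) = (((n : ℝ) : ℂ)) by norm_num,
          Complex.norm_cpow_eq_rpow_re_of_pos hn']
      rw [this, Real.rpow_neg (le_of_lt hn'), div_eq_mul_inv]
  refine ⟨∑' n, a n / (n : ℂ) ^ s, ?_⟩
  have h2 := hsum.hasSum.tendsto_sum_nat
  have h3 := h2.comp (tendsto_add_atTop_nat 1)
  refine h3.congr fun K => ?_
  rw [Function.comp_apply, sum_Icc_one_eq _ (by rw [ha0, zero_div]) K]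
end
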